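/- If p : X → Y is a covering map with finite fibers and X is Hausdorff, then any open cover V of X can be refined by a covering structure of p. -/

import Mathlib

open Set Pointwise

/-- `p` restricts to a homeomorphism of `U ⊆ X` onto `V ⊆ Y`. -/
def RestrictsToHomeo {X Y : Type*} [TopologicalSpace X] [TopologicalSpace Y]
    (p : X → Y) (U : Set X) (V : Set Y) : Prop :=
  ∃ e : U ≃ₜ V, ∀ u : U, (e u : Y) = p u

/-- A **slice** of `p : X → Y`: an open set `U ⊆ X` such that `p ⁻¹' (p '' U)` is a
disjoint union of open sets, one of which is `U`, each mapped by `p` homeomorphically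
onto `p '' U`. -/
def IsSlice {X Y : Type*} [TopologicalSpace X] [TopologicalSpace Y]
    (p : X → Y) (U : Set X) : Prop :=
  IsOpen U ∧ ∃ D : Set (Set X), U ∈ D ∧ (∀ W ∈ D, IsOpen W) ∧
    D.PairwiseDisjoint id ∧ ⋃₀ D = p ⁻¹' (p '' U) ∧
    ∀ W ∈ D, RestrictsToHomeo p W (p '' U)

/-- A **covering structure** of `p : X → Y`: an open cover `S` of `X` by slices of `p`
such that for each `U ∈ S`, `p ⁻¹' (p '' U)` is a disjoint union of elements of `S`,
each with image `p '' U`. -/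
def IsCoveringStructure {X Y : Type*} [TopologicalSpace X] [TopologicalSpace Y]
    (p : X → Y) (S : Set (Set X)) : Prop :=
  (∀ U ∈ S, IsSlice p U) ∧ ⋃₀ S = Set.univ ∧
    ∀ U ∈ S, ∃ D ⊆ S, D.PairwiseDisjoint id ∧ ⋃₀ D = p ⁻¹' (p '' U) ∧
      ∀ W ∈ D, p '' W = p '' U

/-- The **star** of a point `x` with respect to a family `S` of subsets. -/
def st {X : Type*} (x : X) (S : Set (Set X)) : Set X := ⋃₀ {U | U ∈ S ∧ x ∈ U}

/-- An **overlay structure** of `p : X → Y`: a covering structure `S` such that for every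
`x ∈ X` the star `st x S` is a slice of `p`. -/
def IsOverlayStructure {X Y : Type*} [TopologicalSpace X] [TopologicalSpace Y]
    (p : X → Y) (S : Set (Set X)) : Prop :=
  IsCoveringStructure p S ∧ ∀ x : X, IsSlice p (st x S)

/-- `p` is an **overlay** if it admits an overlay structure. -/
def IsOverlay {X Y : Type*} [TopologicalSpace X] [TopologicalSpace Y]
    (p : X → Y) : Prop :=
  ∃ S : Set (Set X), IsOverlayStructure p S

theorem key {X Y : Type*} [TopologicalSpace X] [TopologicalSpace Y]
    (p : X → Y) (hp : IsCoveringMap p) (hfin : ∀ y : Y, (p ⁻¹' {y}).Finite)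
    (𝒱 : Set (Set X)) (hopen : ∀ V ∈ 𝒱, IsOpen V) (hcov : ⋃₀ 𝒱 = Set.univ)
    (y : Y) :
    ∃ (W : Set Y) (D : Set (Set X)), IsOpen W ∧ y ∈ W ∧ D.PairwiseDisjoint id ∧
      ⋃₀ D = p ⁻¹' W ∧ ∀ A ∈ D, IsOpen A ∧ p '' A = W ∧ RestrictsToHomeo p A W ∧
        ∃ V ∈ 𝒱, A ⊆ V := by
  classical
  set ι := p ⁻¹' {y} with hι
  rcases isEmpty_or_nonempty ι with hemp | hne
  · obtain ⟨-, U, hyU, hU, -, H, -⟩ := hp y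
    refine ⟨U, ∅, hU, hyU, pairwiseDisjoint_empty, ?_, by simp⟩
    rw [sUnion_empty]; ext x; simp only [mem_empty_iff_false, false_iff]
    intro hx; exact hemp.elim (H ⟨x, hx⟩).2
  obtain ⟨hdisc, t, hyt⟩ : DiscreteTopology ι ∧ ∃ t : Bundle.Trivialization ι p, y ∈ t.baseSet :=
    ⟨(hp y).1, (hp y).toTrivialization, (hp y).mem_toTrivialization_baseSet⟩
  haveI : DiscreteTopology ι := hdisc
  haveI : Finite ι := (hfin y).to_subtype
  -- section maps
  set s : ι → Y → X := fun i w => t.toOpenPartialHomeomorph.symm (w, i) with hs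
  have hsect : ∀ (i : ι) (w : Y), w ∈ t.baseSet → p (s i w) = w := fun i w hw =>
    t.proj_symm_apply' hw
  have hsrc : ∀ (i : ι) (w : Y), w ∈ t.baseSet → s i w ∈ t.source := by
    intro i w hw
    exact t.toOpenPartialHomeomorph.map_target (by simpa [t.mem_target] using hw)
  have hts : ∀ (i : ι) (w : Y), w ∈ t.baseSet → t (s i w) = (w, i) := by
    intro i w hw
    exact t.toOpenPartialHomeomorph.right_inv (by simpa [t.mem_target] using hw)
  have hscont : ∀ i : ι, ContinuousOn (s i) t.baseSet := by
    intro i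
    apply t.toOpenPartialHomeomorph.continuousOn_symm.comp
      (Continuous.continuousOn (continuous_id.prodMk continuous_const))
    intro w hw
    simpa [t.mem_target] using hw
  -- choose V i
  have hVex : ∀ i : ι, ∃ V ∈ 𝒱, s i y ∈ V := by
    intro i
    have : s i y ∈ ⋃₀ 𝒱 := by rw [hcov]; trivial
    simpa [mem_sUnion] using this
  choose V hV𝒱 hVmem using hVex
  set W : Set Y := t.baseSet ∩ ⋂ i : ι, {w ∈ t.baseSet | s i w ∈ V i} with hW
  have hWsub : W ⊆ t.baseSet := inter_subset_left
  have hWopen : IsOpen W := by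
    apply t.open_baseSet.inter
    apply isOpen_iInter_of_finite
    intro i
    exact (hscont i).isOpen_inter_preimage t.open_baseSet (hopen _ (hV𝒱 i))
  have hyW : y ∈ W := by
    refine ⟨hyt, mem_iInter.2 fun i => ⟨hyt, hVmem i⟩⟩
  set D : Set (Set X) := range (fun i : ι => s i '' W) with hD
  refine ⟨W, D, hWopen, hyW, ?_, ?_, ?_⟩
  · -- pairwise disjoint
    rintro A ⟨i, rfl⟩ B ⟨j, rfl⟩ hne
    have hij : i ≠ j := by rintro rfl; exact hne rfl
    intro C hCA hCB x hx
    obtain ⟨w, hw, hwx⟩ := hCA hx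
    obtain ⟨w', hw', hwx'⟩ := hCB hx
    have h1 := hts i _ (hWsub hw)
    have h2 := hts j _ (hWsub hw')
    rw [hwx] at h1; rw [hwx'] at h2
    rw [h1] at h2
    exact absurd (congrArg Prod.snd h2) hij
  · -- union
    apply subset_antisymm
    · rintro x ⟨A, ⟨i, rfl⟩, w, hw, rfl⟩
      simpa [hsect i _ (hWsub hw)] using hw
    · intro x hx
      have hx' : p x ∈ W := hx
      have hsrcx : x ∈ t.source := t.mem_source.2 (hWsub hx')
      refine ⟨s (t x).2 '' W, ⟨(t x).2, rfl⟩, p x, hx', ?_⟩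
      have := t.symm_apply_mk_proj hsrcx
      exact this
  · rintro A ⟨i, rfl⟩
    have hopenA : IsOpen (s i '' W) := by
      have heq : s i '' W = t.source ∩ ⇑t ⁻¹' (W ×ˢ ({i} : Set ι)) := by
        apply subset_antisymm
        · rintro x ⟨w, hw, rfl⟩
          exact ⟨hsrc i _ (hWsub hw), by simp [hts i _ (hWsub hw), hw]⟩
        · rintro x ⟨hxs, hxt⟩
          obtain ⟨hw, hi⟩ := hxt
          refine ⟨(t x).1, hw, ?_⟩
          have : s ((t x).2) ((t x).1) = x := t.toOpenPartialHomeomorph.left_inv hxs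
          rwa [show ((t x).2) = i from hi] at this
      rw [heq]
      exact t.continuousOn_toFun.isOpen_inter_preimage t.open_source
        ((hWopen.prod (isOpen_discrete _)))
    have himg : p '' (s i '' W) = W := by
      apply subset_antisymm
      · rintro w ⟨x, ⟨w', hw', rfl⟩, rfl⟩
        rwa [hsect i _ (hWsub hw')]
      · intro w hw
        exact ⟨s i w, ⟨w, hw, rfl⟩, hsect i _ (hWsub hw)⟩
    refine ⟨hopenA, himg, ?_, V i, hV𝒱 i, ?_⟩
    · -- homeomorphism
      refine ⟨@Homeomorph.mk _ _ _ _ ⟨fun u => ⟨p u, by obtain ⟨w, hw, h⟩ := u.2; rw [← h, hsect i _ (hWsub hw)]; exact hw⟩,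
        fun w => ⟨s i w, mem_image_of_mem _ w.2⟩, ?_, ?_⟩ ?_ ?_, fun u => rfl⟩
      · rintro ⟨x, w, hw, rfl⟩
        simp [hsect i _ (hWsub hw)]
      · rintro ⟨w, hw⟩
        simp [hsect i _ (hWsub hw)]
      · exact Continuous.subtype_mk (hp.continuous.comp continuous_subtype_val) _
      · exact Continuous.subtype_mk (((hscont i).mono hWsub).restrict) _
    · -- A ⊆ V i
      rintro x ⟨w, hw, rfl⟩
      have := mem_iInter.1 hw.2 i
      exact this.2

/-- If `p : X → Y` is a covering map with finite fibers and `X` is Hausdorff, then any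
open cover `𝒱` of `X` can be refined by a covering structure of `p`. -/
theorem exists_covering_structure_refinement
    {X Y : Type*} [TopologicalSpace X] [TopologicalSpace Y] [T2Space X]
    (p : X → Y) (hp : IsCoveringMap p)
    (hfin : ∀ y : Y, (p ⁻¹' {y}).Finite)
    (𝒱 : Set (Set X)) (hopen : ∀ V ∈ 𝒱, IsOpen V) (hcov : ⋃₀ 𝒱 = Set.univ) :
    ∃ S : Set (Set X), IsCoveringStructure p S ∧ ∀ A ∈ S, ∃ V ∈ 𝒱, A ⊆ V := by
    classical
  choose W D hWopen hyW hdisj hunion hA using key p hp hfin 𝒱 hopen hcov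
  refine ⟨⋃ y, D y, ⟨?_, ?_, ?_⟩, ?_⟩
  · rintro U hU
    obtain ⟨y, hUy⟩ := mem_iUnion.1 hU
    obtain ⟨hUopen, hUimg, _, _⟩ := hA y U hUy
    refine ⟨hUopen, D y, hUy, fun A hAy => (hA y A hAy).1, hdisj y, ?_, ?_⟩
    · rw [hUimg, hunion y]
    · intro A hAy
      rw [hUimg]
      exact (hA y A hAy).2.2.1
  · apply eq_univ_of_forall
    intro x
    have hx : x ∈ p ⁻¹' W (p x) := hyW (p x)
    rw [← hunion (p x)] at hx
    obtain ⟨A, hAy, hxA⟩ := hx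
    exact ⟨A, mem_iUnion.2 ⟨p x, hAy⟩, hxA⟩
  · rintro U hU
    obtain ⟨y, hUy⟩ := mem_iUnion.1 hU
    obtain ⟨_, hUimg, _, _⟩ := hA y U hUy
    refine ⟨D y, fun A hAy => mem_iUnion.2 ⟨y, hAy⟩, hdisj y, ?_, ?_⟩
    · rw [hUimg, hunion y]
    · intro A hAy
      rw [hUimg]
      exact (hA y A hAy).2.1
  · rintro A hAmem
    obtain ⟨y, hAy⟩ := mem_iUnion.1 hAmem
    exact (hA y A hAy).2.2.2
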